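/- Let G ⊆ ℝ be countable, let Y ⊆ ℝ be a random closed set that is stationary (Y + a has the same distribution as Y for all a ∈ ℝ) and almost surely countable. Then P[G ∩ Y ≠ ∅] = 0. -/

import Mathlib

open MeasureTheory Filter Metric Set ENNReal NNReal
open scoped Classical

/-- For a closed countable (hence Lebesgue-null) set `C ⊆ ℝ`, the fraction of
dyadic grid points `k/2^n`, `k < 2^n`, lying in `C` tends to `0`. -/
lemma dyadic_fraction_tendsto_zero (C : Set ℝ) (hC : IsClosed C) (hcnt : C.Countable) :
    Tendsto (fun n : ℕ =>
        (((Finset.range (2^n)).filter (fun k : ℕ => ((k : ℝ) / 2^n) ∈ C)).card : ℝ≥0∞)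
          * ((2 : ℝ≥0∞)^n)⁻¹)
      atTop (nhds 0) := by
  classical
  set K : Set ℝ := C ∩ Set.Icc 0 1 with hKdef
  have hKcomp : IsCompact K := isCompact_Icc.inter_left hC
  have hK0 : volume K = 0 := ((hcnt.mono inter_subset_left).measure_zero _)
  have hthick : Tendsto (fun r => volume (cthickening r K)) (nhds 0) (nhds 0) := by
    have := tendsto_measure_cthickening_of_isCompact (μ := volume) hKcomp
    rwa [hK0] at this
  rw [ENNReal.tendsto_nhds_zero]
  intro ε hε
  have hev : ∀ᶠ r in nhds (0:ℝ), volume (cthickening r K) < ε :=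
    hthick.eventually (gt_mem_nhds hε)
  rw [Metric.eventually_nhds_iff] at hev
  obtain ⟨δ, hδpos, hδ⟩ := hev
  have hvol : volume (cthickening (δ/2) K) < ε := by
    apply hδ
    rw [Real.dist_eq]
    rw [abs_of_pos (by linarith)]
    linarith
  have hhalf : Tendsto (fun n : ℕ => ((1:ℝ)/2)^n) atTop (nhds 0) :=
    tendsto_pow_atTop_nhds_zero_of_lt_one (by norm_num) (by norm_num)
  have hev2 : ∀ᶠ n : ℕ in atTop, ((1:ℝ)/2)^n < δ/2 :=
    hhalf.eventually (gt_mem_nhds (by linarith))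
  filter_upwards [hev2] with n hn
  set S := (Finset.range (2^n)).filter (fun k : ℕ => ((k : ℝ) / 2^n) ∈ C) with hS
  have h2n : (0:ℝ) < 2^n := by positivity
  have hgap : ((1:ℝ)/2)^n = 1/2^n := by
    rw [div_pow, one_pow]
  -- the dyadic intervals with left endpoints in S sit inside the thickening
  have hsub : ∀ k ∈ S, Set.Ico ((k:ℝ)/2^n) (((k:ℝ)+1)/2^n) ⊆ cthickening (δ/2) K := by
    intro k hk x hx
    simp only [hS, Finset.mem_filter, Finset.mem_range] at hk
    obtain ⟨hklt, hkC⟩ := hk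
    have hkK : ((k:ℝ)/2^n) ∈ K := by
      refine ⟨hkC, by positivity, ?_⟩
      rw [div_le_one h2n]
      exact_mod_cast hklt.le
    apply Metric.mem_cthickening_of_dist_le x _ _ _ hkK
    obtain ⟨hx1, hx2⟩ := hx
    rw [Real.dist_eq, abs_of_nonneg (by linarith)]
    have hd : ((k:ℝ)+1)/2^n - (k:ℝ)/2^n = 1/2^n := by
      field_simp; ring
    rw [hgap] at hn
    linarith
  have key : ∀ i j : ℕ, i < j → ((i:ℝ)+1)/2^n ≤ (j:ℝ)/2^n := by
    intro i j hij
    have hij' : ((i:ℝ)+1) ≤ (j:ℝ) := by exact_mod_cast hij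
    gcongr
  have hdisj : (S : Set ℕ).PairwiseDisjoint
      (fun k => Set.Ico ((k:ℝ)/2^n) (((k:ℝ)+1)/2^n)) := by
    intro i _ j _ hij
    rw [Function.onFun, Set.Ico_disjoint_Ico]
    rcases lt_or_gt_of_ne hij with h | h
    · exact le_trans (min_le_left _ _) ((key i j h).trans (le_max_right _ _))
    · exact le_trans (min_le_right _ _) ((key j i h).trans (le_max_left _ _))
  have hvol1 : ∀ k : ℕ, volume (Set.Ico ((k:ℝ)/2^n) (((k:ℝ)+1)/2^n)) = ((2:ℝ≥0∞)^n)⁻¹ := by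
    intro k
    rw [Real.volume_Ico]
    have hd : ((k:ℝ)+1)/2^n - (k:ℝ)/2^n = (2^n:ℝ)⁻¹ := by field_simp; ring
    rw [hd, ENNReal.ofReal_inv_of_pos h2n]
    congr 1
    rw [ENNReal.ofReal_pow (by norm_num)]
    norm_num
  have hcount : (S.card : ℝ≥0∞) * ((2:ℝ≥0∞)^n)⁻¹
      = volume (⋃ k ∈ S, Set.Ico ((k:ℝ)/2^n) (((k:ℝ)+1)/2^n)) := by
    rw [measure_biUnion_finset hdisj (fun k _ => measurableSet_Ico)]
    simp only [hvol1]
    rw [Finset.sum_const, nsmul_eq_mul]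
  calc (S.card : ℝ≥0∞) * ((2:ℝ≥0∞)^n)⁻¹
      = volume (⋃ k ∈ S, Set.Ico ((k:ℝ)/2^n) (((k:ℝ)+1)/2^n)) := hcount
    _ ≤ volume (cthickening (δ/2) K) := measure_mono (Set.iUnion₂_subset hsub)
    _ ≤ ε := hvol.le

/-- Core of Proposition 2.11: if `G ⊆ ℝ` is countable and `Y` is a stationary
random closed set (its hitting probabilities are invariant under translation)
which is almost surely countable, then `P[G ∩ Y ≠ ∅] = 0`. -/
theorem interpolation_percolation_stationary_avoids_countable
    {Ω : Type*} [MeasurableSpace Ω] (P : Measure Ω) [IsProbabilityMeasure P]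
    (G : Set ℝ) (hG : G.Countable)
    (Y : Ω → Set ℝ)
    (hclosed : ∀ ω, IsClosed (Y ω))
    (hcount : ∀ᵐ ω ∂P, (Y ω).Countable)
    (hmeas : ∀ B : Set ℝ, B.Countable → MeasurableSet {ω | (Y ω ∩ B).Nonempty})
    (hstat : ∀ (a : ℝ) (B : Set ℝ), B.Countable →
      P {ω | (((fun y => y + a) '' Y ω) ∩ B).Nonempty} = P {ω | (Y ω ∩ B).Nonempty}) :
    P {ω | (G ∩ Y ω).Nonempty} = 0 := by
  classical
  have hAmeas : ∀ x : ℝ, MeasurableSet {ω | x ∈ Y ω} := by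
    intro x
    have h := hmeas {x} (Set.countable_singleton x)
    have e : {ω | (Y ω ∩ {x}).Nonempty} = {ω | x ∈ Y ω} := by
      ext ω; simp [Set.inter_singleton_nonempty]
    rwa [e] at h
  have hconst : ∀ x : ℝ, P {ω | x ∈ Y ω} = P {ω | (0:ℝ) ∈ Y ω} := by
    intro x
    have h := hstat x {x} (Set.countable_singleton x)
    have e1 : {ω | (((fun y => y + x) '' Y ω) ∩ ({x} : Set ℝ)).Nonempty}
        = {ω | (0:ℝ) ∈ Y ω} := by
      ext ω
      simp only [Set.inter_singleton_nonempty, Set.mem_image, Set.mem_setOf_eq]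
      constructor
      · rintro ⟨y, hy, hyx⟩
        have hy0 : y = 0 := by linarith
        rwa [hy0] at hy
      · intro h0; exact ⟨0, h0, by ring⟩
    have e2 : {ω | (Y ω ∩ ({x} : Set ℝ)).Nonempty} = {ω | x ∈ Y ω} := by
      ext ω; simp [Set.inter_singleton_nonempty]
    rw [e1, e2] at h
    exact h.symm
  set p : ℝ≥0∞ := P {ω | (0:ℝ) ∈ Y ω} with hp
  set g : ℕ → Ω → ℝ≥0∞ := fun n ω =>
    (((Finset.range (2^n)).filter (fun k : ℕ => ((k : ℝ) / 2^n) ∈ Y ω)).card : ℝ≥0∞)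
      * ((2 : ℝ≥0∞)^n)⁻¹ with hg
  have h2ne : ∀ n : ℕ, ((2:ℝ≥0∞)^n) ≠ 0 := fun n => pow_ne_zero n (by norm_num)
  have h2nt : ∀ n : ℕ, ((2:ℝ≥0∞)^n) ≠ ⊤ := fun n => ENNReal.pow_ne_top (by norm_num)
  have hcard : ∀ (n : ℕ) (ω : Ω),
      (((Finset.range (2^n)).filter (fun k : ℕ => ((k : ℝ) / 2^n) ∈ Y ω)).card : ℝ≥0∞)
        = ∑ k ∈ Finset.range (2^n),
            Set.indicator {ω' | ((k:ℝ)/2^n) ∈ Y ω'} (fun _ => (1:ℝ≥0∞)) ω := by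
    intro n ω
    rw [Finset.card_filter, Nat.cast_sum]
    refine Finset.sum_congr rfl (fun k _ => ?_)
    by_cases hk : ((k:ℝ)/2^n) ∈ Y ω <;> simp [Set.indicator_apply, hk]
  have hgmeas : ∀ n, Measurable (g n) := by
    intro n
    apply Measurable.mul_const
    have e : (fun ω =>
        (((Finset.range (2^n)).filter (fun k : ℕ => ((k : ℝ) / 2^n) ∈ Y ω)).card : ℝ≥0∞))
        = fun ω => ∑ k ∈ Finset.range (2^n),
            Set.indicator {ω' | ((k:ℝ)/2^n) ∈ Y ω'} (fun _ => (1:ℝ≥0∞)) ω := by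
      funext ω; exact hcard n ω
    rw [e]
    exact Finset.measurable_sum _ (fun k _ => Measurable.indicator measurable_const (hAmeas _))
  have hgint : ∀ n, ∫⁻ ω, g n ω ∂P = p := by
    intro n
    have e : ∫⁻ ω, g n ω ∂P
        = (∫⁻ ω, (((Finset.range (2^n)).filter
            (fun k : ℕ => ((k : ℝ) / 2^n) ∈ Y ω)).card : ℝ≥0∞) ∂P) * ((2:ℝ≥0∞)^n)⁻¹ := by
      rw [hg]
      exact lintegral_mul_const _ (by
        have := hgmeas n
        -- measurability of the card function
        have e2 : (fun ω =>
            (((Finset.range (2^n)).filter (fun k : ℕ => ((k : ℝ) / 2^n) ∈ Y ω)).card : ℝ≥0∞))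
            = fun ω => ∑ k ∈ Finset.range (2^n),
                Set.indicator {ω' | ((k:ℝ)/2^n) ∈ Y ω'} (fun _ => (1:ℝ≥0∞)) ω := by
          funext ω; exact hcard n ω
        rw [e2]
        exact Finset.measurable_sum _
          (fun k _ => Measurable.indicator measurable_const (hAmeas _)))
    rw [e]
    have e3 : ∫⁻ ω, (((Finset.range (2^n)).filter
        (fun k : ℕ => ((k : ℝ) / 2^n) ∈ Y ω)).card : ℝ≥0∞) ∂P = (2^n : ℕ) * p := by
      calc ∫⁻ ω, (((Finset.range (2^n)).filter
            (fun k : ℕ => ((k : ℝ) / 2^n) ∈ Y ω)).card : ℝ≥0∞) ∂P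
          = ∫⁻ ω, (∑ k ∈ Finset.range (2^n),
              Set.indicator {ω' | ((k:ℝ)/2^n) ∈ Y ω'} (fun _ => (1:ℝ≥0∞)) ω) ∂P := by
            congr 1; funext ω; exact hcard n ω
        _ = ∑ k ∈ Finset.range (2^n),
              ∫⁻ ω, Set.indicator {ω' | ((k:ℝ)/2^n) ∈ Y ω'} (fun _ => (1:ℝ≥0∞)) ω ∂P := by
            exact lintegral_finset_sum _
              (fun k _ => Measurable.indicator measurable_const (hAmeas _))
        _ = ∑ k ∈ Finset.range (2^n), P {ω | ((k:ℝ)/2^n) ∈ Y ω} := by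
            refine Finset.sum_congr rfl (fun k _ => ?_)
            exact lintegral_indicator_one (hAmeas _)
        _ = ∑ _k ∈ Finset.range (2^n), p := by
            exact Finset.sum_congr rfl (fun k _ => hconst _)
        _ = (2^n : ℕ) * p := by
            rw [Finset.sum_const, Finset.card_range, nsmul_eq_mul]
    rw [e3]
    have e4 : ((2^n : ℕ) : ℝ≥0∞) = (2:ℝ≥0∞)^n := by push_cast; ring
    rw [e4, mul_comm ((2:ℝ≥0∞)^n) p, mul_assoc, ENNReal.mul_inv_cancel (h2ne n) (h2nt n),
      mul_one]
  have hbound : ∀ n, g n ≤ᵐ[P] (fun _ => (1:ℝ≥0∞)) := by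
    intro n
    refine Filter.Eventually.of_forall (fun ω => ?_)
    rw [hg]
    have hle : (((Finset.range (2^n)).filter
        (fun k : ℕ => ((k : ℝ) / 2^n) ∈ Y ω)).card : ℝ≥0∞) ≤ (2:ℝ≥0∞)^n := by
      have := (Finset.card_filter_le (Finset.range (2^n))
        (fun k : ℕ => ((k : ℝ) / 2^n) ∈ Y ω))
      rw [Finset.card_range] at this
      calc (((Finset.range (2^n)).filter
            (fun k : ℕ => ((k : ℝ) / 2^n) ∈ Y ω)).card : ℝ≥0∞)
          ≤ ((2^n : ℕ) : ℝ≥0∞) := by exact_mod_cast this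
        _ = (2:ℝ≥0∞)^n := by push_cast; ring
    calc (((Finset.range (2^n)).filter
          (fun k : ℕ => ((k : ℝ) / 2^n) ∈ Y ω)).card : ℝ≥0∞) * ((2:ℝ≥0∞)^n)⁻¹
        ≤ (2:ℝ≥0∞)^n * ((2:ℝ≥0∞)^n)⁻¹ := mul_le_mul_left hle _
      _ = 1 := ENNReal.mul_inv_cancel (h2ne n) (h2nt n)
  have hlim : ∀ᵐ ω ∂P, Filter.Tendsto (fun n => g n ω) Filter.atTop (nhds 0) := by
    filter_upwards [hcount] with ω hω
    exact dyadic_fraction_tendsto_zero (Y ω) (hclosed ω) hω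
  have hDCT := tendsto_lintegral_of_dominated_convergence (μ := P)
    (F := g) (f := fun _ => 0) (bound := fun _ => 1) hgmeas hbound
    (by simp) hlim
  rw [lintegral_zero] at hDCT
  have hpconst : Filter.Tendsto (fun _ : ℕ => p) Filter.atTop (nhds 0) := by
    have e : (fun n => ∫⁻ ω, g n ω ∂P) = fun _ : ℕ => p := funext hgint
    rwa [e] at hDCT
  have hp0 : p = 0 := tendsto_nhds_unique tendsto_const_nhds hpconst
  have hev : {ω | (G ∩ Y ω).Nonempty} = ⋃ x ∈ G, {ω | x ∈ Y ω} := by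
    ext ω
    simp only [Set.mem_setOf_eq, Set.mem_iUnion, Set.inter_nonempty]
    tauto
  rw [hev]
  exact (measure_biUnion_null_iff hG).2 (fun x _ => by rw [hconst x]; exact hp0)
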